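/- arXiv:1004.4237 — 5 statements merged into one kernel-verified Lean document; each statement's English description precedes it below -/
import Mathlib

section
/- For variables γ = (γ_1,…,γ_n) and F_γ(t,u) = ∏_{i=1}^n (1 + u·e^{γ_i t}) in ℚ(γ)[[u,t]], the power series F_γ((1+u)t, u)/(1+u)^n has the property that its t^k-coefficient is a polynomial in u of degree at most k, for every k. -/
open PowerSeries

variable {K : Type*}

/-- The exponential-type series `e^{ct} = Σ_m c^m t^m / m!` over `K`. -/
noncomputable def expSeries' [Field K] (c : K) : PowerSeries K :=
  PowerSeries.mk fun m => c ^ m / (m.factorial : K)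

/-- `F_γ((1+u)t, u) = ∏_{i=1}^n (1 + u e^{γ_i (1+u) t})`, as a power series in `t`
(outer variable) with coefficients in `K[[u]]` (inner variable `u`). -/
noncomputable def Fsub [Field K] {n : ℕ} (γ : Fin n → K) :
    PowerSeries (PowerSeries K) :=
  ∏ i : Fin n, (1 + PowerSeries.mk fun m =>
    (PowerSeries.X : PowerSeries K) * (1 + PowerSeries.X) ^ m *
      PowerSeries.C (R := K) (γ i ^ m / (m.factorial : K)))

/-- The property that the `t^k`-coefficient is a polynomial of degree at most `k`. -/
def HasPolyCoeffs [Field K] (F : PowerSeries (PowerSeries K)) : Prop :=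
  ∀ k : ℕ, ∃ p : Polynomial K, p.degree ≤ (k : ℕ) ∧
    PowerSeries.coeff (R := PowerSeries K) k F = (p : PowerSeries K)

lemma hasPolyCoeffs_one [Field K] : HasPolyCoeffs (1 : PowerSeries (PowerSeries K)) := by
  intro k
  refine ⟨if k = 0 then 1 else 0, ?_, ?_⟩
  · split
    · simpa [Polynomial.degree_one] using (by exact_mod_cast Nat.zero_le k : (0 : WithBot ℕ) ≤ k)
    · simp
  · rw [PowerSeries.coeff_one]
    split <;> simp

lemma hasPolyCoeffs_mul [Field K] {F G : PowerSeries (PowerSeries K)}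
    (hF : HasPolyCoeffs F) (hG : HasPolyCoeffs G) : HasPolyCoeffs (F * G) := by
  intro k
  choose p hpdeg hpco using hF
  choose q hqdeg hqco using hG
  refine ⟨∑ ab ∈ Finset.HasAntidiagonal.antidiagonal k, p ab.1 * q ab.2, ?_, ?_⟩
  · refine (Polynomial.degree_sum_le _ _).trans (Finset.sup_le fun ab hab => ?_)
    have h := Finset.HasAntidiagonal.mem_antidiagonal.mp hab
    calc (p ab.1 * q ab.2).degree ≤ (ab.1 : WithBot ℕ) + (ab.2 : WithBot ℕ) :=
          Polynomial.degree_mul_le_of_le (hpdeg _) (hqdeg _)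
      _ = ((ab.1 + ab.2 : ℕ) : WithBot ℕ) := by push_cast; ring
      _ = (k : WithBot ℕ) := by rw [h]
  · rw [PowerSeries.coeff_mul]
    rw [show (((∑ ab ∈ Finset.HasAntidiagonal.antidiagonal k, p ab.1 * q ab.2 : Polynomial K)) : PowerSeries K)
        = ∑ ab ∈ Finset.HasAntidiagonal.antidiagonal k, (p ab.1 : PowerSeries K) * (q ab.2 : PowerSeries K) from by
      rw [← Polynomial.coeToPowerSeries.ringHom_apply, map_sum]
      exact Finset.sum_congr rfl fun ab _ => by
        rw [map_mul, Polynomial.coeToPowerSeries.ringHom_apply,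
          Polynomial.coeToPowerSeries.ringHom_apply]]
    exact Finset.sum_congr rfl fun ab _ => by rw [hpco, hqco]

lemma hasPolyCoeffs_prod [Field K] {ι : Type*} (s : Finset ι)
    (f : ι → PowerSeries (PowerSeries K)) (h : ∀ i ∈ s, HasPolyCoeffs (f i)) :
    HasPolyCoeffs (∏ i ∈ s, f i) :=
  Finset.prod_induction f _ (fun _ _ => hasPolyCoeffs_mul) hasPolyCoeffs_one h

lemma hasPolyCoeffs_factor [Field K] [CharZero K] (c : K) :
    HasPolyCoeffs (PowerSeries.C (R := PowerSeries K) ((1 + PowerSeries.X : PowerSeries K)⁻¹) *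
      (1 + PowerSeries.mk fun m =>
        (PowerSeries.X : PowerSeries K) * (1 + PowerSeries.X) ^ m *
          PowerSeries.C (R := K) (c ^ m / (m.factorial : K)))) := by
  have hu : constantCoeff (R := K) (1 + X) ≠ 0 := by simp
  have hinv : (1 + X : PowerSeries K)⁻¹ * (1 + X) = 1 := PowerSeries.inv_mul_cancel _ hu
  intro k
  match k with
  | 0 =>
    refine ⟨1, by simpa [Polynomial.degree_one] using le_refl (0 : WithBot ℕ), ?_⟩
    rw [PowerSeries.coeff_C_mul, map_add, PowerSeries.coeff_one, PowerSeries.coeff_mk]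
    simp only [Nat.factorial_zero, Nat.cast_one, pow_zero, div_one, map_one, mul_one, one_mul,
      if_pos rfl, if_true]
    rw [Polynomial.coe_one, hinv]
  | (j+1) =>
    refine ⟨Polynomial.X * (1 + Polynomial.X) ^ j *
      Polynomial.C (c ^ (j+1) / ((j+1).factorial : K)), ?_, ?_⟩
    · have hb : (1 + Polynomial.X : Polynomial K).degree ≤ 1 :=
        (Polynomial.degree_add_le _ _).trans
          (max_le (Polynomial.degree_one_le.trans (by exact_mod_cast Nat.zero_le 1))
            Polynomial.degree_X_le)
      have := Polynomial.degree_mul_le_of_le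
        (Polynomial.degree_mul_le_of_le Polynomial.degree_X_le
          (Polynomial.degree_pow_le_of_le j hb)) (Polynomial.degree_C_le (a := c ^ (j+1) / ((j+1).factorial : K)))
      refine this.trans ?_
      rw [mul_one, add_zero]
      exact_mod_cast le_of_eq (by push_cast; ring)
    · rw [PowerSeries.coeff_C_mul, map_add, PowerSeries.coeff_one, PowerSeries.coeff_mk]
      rw [if_neg (Nat.succ_ne_zero j), zero_add]
      rw [Polynomial.coe_mul, Polynomial.coe_mul, Polynomial.coe_pow, Polynomial.coe_add,
        Polynomial.coe_one, Polynomial.coe_X, Polynomial.coe_C]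
      calc (1 + X : PowerSeries K)⁻¹ * (X * (1 + X) ^ (j+1) * PowerSeries.C (R := K) _)
          = ((1 + X : PowerSeries K)⁻¹ * (1 + X)) * (X * (1 + X) ^ j * PowerSeries.C (R := K) _) := by
            ring
        _ = X * (1 + X) ^ j * PowerSeries.C (R := K) _ := by rw [hinv, one_mul]

/-- each `t^k`-coefficient of `F_γ((1+u)t,u)/(1+u)^n` is a polynomial
in `u` of degree at most `k`. -/
theorem Fsub_div_mem_S [Field K] [CharZero K] {n : ℕ} (γ : Fin n → K) :
    ∀ k : ℕ, ∃ p : Polynomial K, p.degree ≤ (k : ℕ) ∧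
      PowerSeries.coeff (R := PowerSeries K) k
        (PowerSeries.C (R := PowerSeries K)
            (((1 + PowerSeries.X : PowerSeries K) ^ n)⁻¹) * Fsub γ)
        = (p : PowerSeries K) := by
  have hu : constantCoeff (R := K) (1 + X) ≠ 0 := by simp
  have hinv : (1 + X : PowerSeries K)⁻¹ * (1 + X) = 1 := PowerSeries.inv_mul_cancel _ hu
  have hpowinv : (((1 + X : PowerSeries K) ^ n)⁻¹) = ((1 + X : PowerSeries K)⁻¹) ^ n := by
    exact ((PowerSeries.eq_inv_iff_mul_eq_one (φ := ((1 + X : PowerSeries K)⁻¹) ^ n)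
      (ψ := (1 + X) ^ n) (by simp [map_pow])).mpr (by rw [← mul_pow, hinv, one_pow])).symm
  have key : PowerSeries.C (R := PowerSeries K) (((1 + PowerSeries.X : PowerSeries K) ^ n)⁻¹) *
      Fsub γ = ∏ i : Fin n,
        (PowerSeries.C (R := PowerSeries K) ((1 + PowerSeries.X : PowerSeries K)⁻¹) *
          (1 + PowerSeries.mk fun m =>
            (PowerSeries.X : PowerSeries K) * (1 + PowerSeries.X) ^ m *
              PowerSeries.C (R := K) (γ i ^ m / (m.factorial : K)))) := by
    rw [Finset.prod_mul_distrib, Finset.prod_const, Finset.card_univ, Fintype.card_fin,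
      hpowinv, map_pow, Fsub]
  rw [key]
  exact hasPolyCoeffs_prod _ _ fun i _ => hasPolyCoeffs_factor (γ i)
end

section
/- With F_γ(t,u) = ∏_{i=1}^n (1 + u·e^{γ_i t}), the evaluation of F_γ((1+u)t, u)/(1+u)^n at u = −1 equals E_γ(−t) = ∏_{i=1}^n (1 − γ_i t). (Here the evaluation is meaningful because each t^k-coefficient is a polynomial in u.) -/
open PowerSeries

variable {K : Type*}

/-- Polynomial-coefficient version of `Fsub`. -/
noncomputable def Gp [Field K] {n : ℕ} (γ : Fin n → K) :
    PowerSeries (Polynomial K) :=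
  ∏ i : Fin n, (1 + PowerSeries.mk fun m =>
    (Polynomial.X : Polynomial K) * (1 + Polynomial.X) ^ m *
      Polynomial.C (γ i ^ m / (m.factorial : K)))

lemma map_Gp [Field K] {n : ℕ} (γ : Fin n → K) :
    PowerSeries.map (Polynomial.coeToPowerSeries.ringHom) (Gp γ) = Fsub γ := by
  rw [Gp, Fsub, map_prod]
  refine Finset.prod_congr rfl fun i _ => ?_
  rw [map_add, map_one]
  congr 1
  ext m
  simp only [PowerSeries.coeff_map, PowerSeries.coeff_mk,
    Polynomial.coeToPowerSeries.ringHom_apply]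
  push_cast
  rfl

/-- `Gp` after the substitution `u ↦ u - 1`, with each factor divided by `u`. -/
noncomputable def Hp [Field K] {n : ℕ} (γ : Fin n → K) :
    PowerSeries (Polynomial K) :=
  ∏ i : Fin n, PowerSeries.mk fun m =>
    if m = 0 then 1 else
      (Polynomial.X - 1) * Polynomial.X ^ (m - 1) *
        Polynomial.C (γ i ^ m / (m.factorial : K))

noncomputable def psi (K : Type*) [Field K] : Polynomial K →+* Polynomial K :=
  (Polynomial.aeval (Polynomial.X - 1 : Polynomial K)).toRingHom

lemma psi_apply [Field K] (q : Polynomial K) :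
    psi K q = Polynomial.aeval (Polynomial.X - 1 : Polynomial K) q := rfl

lemma map_psi_factor [Field K] (c : K) :
    PowerSeries.map (psi K) (1 + PowerSeries.mk fun m =>
        (Polynomial.X : Polynomial K) * (1 + Polynomial.X) ^ m *
          Polynomial.C (c ^ m / (m.factorial : K))) =
      PowerSeries.C (Polynomial.X) * PowerSeries.mk fun m =>
        if m = 0 then 1 else
          (Polynomial.X - 1) * Polynomial.X ^ (m - 1) *
            Polynomial.C (c ^ m / (m.factorial : K)) := by
  ext m
  rw [PowerSeries.coeff_map, PowerSeries.coeff_C_mul]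
  cases m with
  | zero =>
      simp [psi_apply, map_add, map_mul, map_pow]
  | succ s =>
      have : (s + 1 : ℕ) ≠ 0 := s.succ_ne_zero
      simp only [PowerSeries.coeff_mk, map_add, PowerSeries.coeff_one, this, if_false,
        Nat.add_eq_zero, and_false, add_zero, zero_add]
      rw [psi_apply]
      simp only [map_mul, map_pow, map_add, map_one, Polynomial.aeval_X,
        Polynomial.aeval_C]
      simp only [Polynomial.algebraMap_eq, Nat.add_sub_cancel]
      ring

lemma map_psi_Gp [Field K] {n : ℕ} (γ : Fin n → K) :
    PowerSeries.map (psi K) (Gp γ) =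
      PowerSeries.C (Polynomial.X ^ n) * Hp γ := by
  rw [Gp, Hp, map_prod, map_pow]
  rw [show (PowerSeries.C (R := Polynomial K) Polynomial.X) ^ n
      = ∏ _i : Fin n, PowerSeries.C (R := Polynomial K) Polynomial.X by
    rw [Finset.prod_const, Finset.card_univ, Fintype.card_fin],
    ← Finset.prod_mul_distrib]
  exact Finset.prod_congr rfl fun i _ => map_psi_factor (γ i)

/-- if the `t^k`-coefficients of `F_γ((1+u)t,u)/(1+u)^n` are the
polynomials `p k` in `u`, then evaluating them at `u = -1` yields
`E_γ(-t) = ∏_{i=1}^n (1 - γ_i t)`. -/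
theorem Fsub_div_eval_neg_one [Field K] [CharZero K] {n : ℕ} (γ : Fin n → K)
    (p : ℕ → Polynomial K)
    (hp : ∀ k : ℕ, PowerSeries.coeff (R := PowerSeries K) k
        (PowerSeries.C (R := PowerSeries K)
            (((1 + PowerSeries.X : PowerSeries K) ^ n)⁻¹) * Fsub γ)
        = (p k : PowerSeries K)) :
    (PowerSeries.mk fun k => (p k).eval (-1)) =
      ∏ i : Fin n, (1 - PowerSeries.C (R := K) (γ i) * PowerSeries.X) := by
  have hconst : PowerSeries.constantCoeff (R := K) ((1 + PowerSeries.X : PowerSeries K) ^ n) ≠ 0 := by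
    simp
  have hu : ((1 + PowerSeries.X : PowerSeries K) ^ n) *
      ((1 + PowerSeries.X : PowerSeries K) ^ n)⁻¹ = 1 :=
    PowerSeries.mul_inv_cancel _ hconst
  have key1 : ∀ k, PowerSeries.coeff (R := PowerSeries K) k (Fsub γ)
      = ((1 + PowerSeries.X : PowerSeries K) ^ n) * (p k : PowerSeries K) := by
    intro k
    calc PowerSeries.coeff (R := PowerSeries K) k (Fsub γ)
        = ((1 + PowerSeries.X : PowerSeries K) ^ n) *
            (((1 + PowerSeries.X : PowerSeries K) ^ n)⁻¹ *
              PowerSeries.coeff (R := PowerSeries K) k (Fsub γ)) := by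
          rw [← mul_assoc, hu, one_mul]
      _ = ((1 + PowerSeries.X : PowerSeries K) ^ n) * (p k : PowerSeries K) := by
          rw [← PowerSeries.coeff_C_mul, hp k]
  have key2 : ∀ k, PowerSeries.coeff (R := Polynomial K) k (Gp γ)
      = (1 + Polynomial.X : Polynomial K) ^ n * p k := by
    intro k
    rw [← Polynomial.coe_inj]
    have h1 : ((PowerSeries.coeff (R := Polynomial K) k (Gp γ) : Polynomial K) : PowerSeries K)
        = PowerSeries.coeff (R := PowerSeries K) k
            (PowerSeries.map (Polynomial.coeToPowerSeries.ringHom) (Gp γ)) := by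
      rw [PowerSeries.coeff_map]; rfl
    rw [h1, map_Gp, key1]
    push_cast
    ring
  have key3 : ∀ k, psi K (p k) = PowerSeries.coeff (R := Polynomial K) k (Hp γ) := by
    intro k
    have h2 := congrArg (psi K) (key2 k)
    have h3 : psi K (PowerSeries.coeff (R := Polynomial K) k (Gp γ))
        = (Polynomial.X : Polynomial K) ^ n * PowerSeries.coeff (R := Polynomial K) k (Hp γ) := by
      have : psi K (PowerSeries.coeff (R := Polynomial K) k (Gp γ))
          = PowerSeries.coeff (R := Polynomial K) k (PowerSeries.map (psi K) (Gp γ)) := by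
        rw [PowerSeries.coeff_map]
      rw [this, map_psi_Gp, PowerSeries.coeff_C_mul]
    have h4 : psi K ((1 + Polynomial.X : Polynomial K) ^ n * p k)
        = (Polynomial.X : Polynomial K) ^ n * psi K (p k) := by
      rw [map_mul, map_pow]
      congr 2
      simp [psi_apply]
    rw [h3, h4] at h2
    exact mul_left_cancel₀ (pow_ne_zero _ Polynomial.X_ne_zero) h2.symm
  have key4 : ∀ k, (p k).eval (-1) = (psi K (p k)).eval 0 := by
    intro k
    rw [psi_apply, ← Polynomial.comp_eq_aeval, Polynomial.eval_comp]
    norm_num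
  have hRHS : (∏ i : Fin n, (1 - PowerSeries.C (R := K) (γ i) * PowerSeries.X))
      = PowerSeries.map (Polynomial.evalRingHom (0 : K)) (Hp γ) := by
    rw [Hp, map_prod]
    refine Finset.prod_congr rfl fun i _ => ?_
    ext m
    rw [PowerSeries.coeff_map, PowerSeries.coeff_mk]
    match m with
    | 0 => simp
    | 1 => simp
    | (s+2) =>
        simp [pow_succ, PowerSeries.coeff_X]
  rw [hRHS]
  ext k
  rw [PowerSeries.coeff_mk, PowerSeries.coeff_map, key4, key3]
  rfl
end

section
/- Let α = (α_1,…,α_n) and β = (β_1,…,β_{n−r}) be two sets of variables, and set C(t,u) = F_α(t,u)/F_β(t,u) where F_γ(t,u) = ∏ (1+u·e^{γ_i t}). Then C(t,u) can be written as Σ_{k≥0} (1+u)^{r−k} a_k(u) t^k where each a_k(u) ∈ ℚ(α,β)[u] is a polynomial in u of degree at most k, and moreover Σ_{k≥0} a_k(−1) t^k = E_α(−t)·H_β(t), where E_α(t) = ∏_{i=1}^n (1+α_i t) and H_β(t) = ∏_{i=1}^{n−r} (1−β_i t)^{−1}. -/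
open PowerSeries

variable {K : Type*}

/-- `F_γ(t, u) = ∏_{i=1}^n (1 + u e^{γ_i t})`, as a power series in `t`
(outer variable) with coefficients in `K[[u]]` (inner variable `u`). -/
noncomputable def Fser [Field K] {n : ℕ} (γ : Fin n → K) :
    PowerSeries (PowerSeries K) :=
  ∏ i : Fin n, (1 + PowerSeries.mk fun m =>
    (PowerSeries.X : PowerSeries K) * PowerSeries.C (γ i ^ m / (m.factorial : K)))

namespace CserAux

/-- The series `f` in `t` over `K[[u]]` has `t^k`-coefficient of the form
`(1+u)^{m-k} a_k(u)` with `a_k` a polynomial of degree `≤ k`, and `g` is the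
specialization `Σ a_k(-1) t^k`. -/
def Pgood [Field K] (m : ℕ) (f : PowerSeries (PowerSeries K)) (g : PowerSeries K) : Prop :=
  ∃ a : ℕ → Polynomial K, (∀ k : ℕ, (a k).degree ≤ (k : ℕ)) ∧
    (∀ k : ℕ, (1 + PowerSeries.X : PowerSeries K) ^ k *
        PowerSeries.coeff k f
      = (1 + PowerSeries.X : PowerSeries K) ^ m * ((a k : Polynomial K) : PowerSeries K)) ∧
    (∀ k : ℕ, PowerSeries.coeff k g = (a k).eval (-1))

theorem Pgood_one [Field K] : Pgood (K := K) 0 1 1 := by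
  refine ⟨fun k => if k = 0 then 1 else 0, ?_, ?_, ?_⟩
  · intro k
    dsimp only
    split <;> simp
  · intro k
    rcases eq_or_ne k 0 with rfl | hk <;>
      simp [PowerSeries.coeff_one, *]
  · intro k
    rcases eq_or_ne k 0 with rfl | hk <;>
      simp [PowerSeries.coeff_one, *]

theorem Pgood_mul [Field K] {m m' : ℕ} {f f' : PowerSeries (PowerSeries K)}
    {g g' : PowerSeries K} (h : Pgood m f g) (h' : Pgood m' f' g') :
    Pgood (m + m') (f * f') (g * g') := by
  obtain ⟨p, hpd, hpc, hpe⟩ := h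
  obtain ⟨q, hqd, hqc, hqe⟩ := h'
  refine ⟨fun k => ∑ i ∈ Finset.range (k + 1), p i * q (k - i), ?_, ?_, ?_⟩
  · intro k
    refine (Polynomial.degree_sum_le _ _).trans ?_
    simp only [Finset.sup_le_iff, Finset.mem_range]
    intro i hi
    refine (Polynomial.degree_mul_le _ _).trans ?_
    calc (p i).degree + (q (k - i)).degree ≤ (i : ℕ) + ((k - i : ℕ) : ℕ) :=
          add_le_add (hpd i) (hqd (k - i))
      _ = (k : ℕ) := by
          rw [← Nat.cast_add]
          norm_cast
          omega
  · intro k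
    rw [PowerSeries.coeff_mul, Finset.Nat.sum_antidiagonal_eq_sum_range_succ_mk,
      Finset.mul_sum]
    have hc : ((∑ i ∈ Finset.range (k + 1), p i * q (k - i) : Polynomial K) : PowerSeries K)
        = ∑ i ∈ Finset.range (k + 1), (p i : PowerSeries K) * (q (k - i) : PowerSeries K) := by
      simp only [← Polynomial.coeToPowerSeries.ringHom_apply, map_sum, map_mul]
    rw [hc, Finset.mul_sum]
    refine Finset.sum_congr rfl fun i hi => ?_
    simp only [Finset.mem_range] at hi
    have hik : i ≤ k := by omega
    calc (1 + PowerSeries.X : PowerSeries K) ^ k *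
          (PowerSeries.coeff i f * PowerSeries.coeff (k - i) f')
        = ((1 + PowerSeries.X) ^ i * PowerSeries.coeff i f) *
          ((1 + PowerSeries.X) ^ (k - i) * PowerSeries.coeff (k - i) f') := by
          have h1 : (1 + PowerSeries.X : PowerSeries K) ^ k
              = (1 + PowerSeries.X) ^ i * (1 + PowerSeries.X) ^ (k - i) := by
            rw [← pow_add, Nat.add_sub_cancel' hik]
          rw [h1]; ring
      _ = (1 + PowerSeries.X) ^ (m + m') * ((p i : PowerSeries K) * (q (k - i) : PowerSeries K)) := by
          rw [hpc i, hqc (k - i), pow_add]; ring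
  · intro k
    rw [PowerSeries.coeff_mul, Finset.Nat.sum_antidiagonal_eq_sum_range_succ_mk]
    rw [Polynomial.eval_finset_sum]
    refine Finset.sum_congr rfl fun i _ => ?_
    rw [hpe i, hqe (k - i), Polynomial.eval_mul]

theorem deg_aux [Field K] (γ : K) (k : ℕ) (hk : 1 ≤ k) :
    ((1 + Polynomial.X : Polynomial K) ^ (k - 1) * Polynomial.X *
      Polynomial.C (γ ^ k / (k.factorial : K))).degree ≤ (k : WithBot ℕ) := by
  have h1 : ((1 + Polynomial.X : Polynomial K)).degree ≤ (1 : WithBot ℕ) := by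
    rw [add_comm, ← Polynomial.C_1]
    exact le_of_eq (Polynomial.degree_X_add_C 1)
  have h2 : ((1 + Polynomial.X : Polynomial K) ^ (k - 1)).degree ≤ ((k - 1 : ℕ) : WithBot ℕ) := by
    simpa using Polynomial.degree_pow_le_of_le (k - 1) h1
  refine (Polynomial.degree_mul_le _ _).trans ?_
  refine le_trans (add_le_add (Polynomial.degree_mul_le_of_le h2 Polynomial.degree_X_le)
    Polynomial.degree_C_le) ?_
  rw [add_zero]
  have : ((k - 1 : ℕ) : WithBot ℕ) + 1 = (k : WithBot ℕ) := by
    norm_cast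
    omega
  rw [this]


theorem Pgood_factor [Field K] (γ : K) :
    Pgood 1 (1 + PowerSeries.mk fun m =>
      (PowerSeries.X : PowerSeries K) * PowerSeries.C (γ ^ m / (m.factorial : K)))
      (1 - PowerSeries.C γ * PowerSeries.X) := by
  refine ⟨fun k => if k = 0 then 1 else
    (1 + Polynomial.X) ^ (k - 1) * Polynomial.X * Polynomial.C (γ ^ k / (k.factorial : K)),
    ?_, ?_, ?_⟩
  · intro k
    dsimp only
    split
    · simp
    · exact deg_aux γ k (by omega)
  · intro k
    rcases eq_or_ne k 0 with rfl | hk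
    · simp [PowerSeries.coeff_one]
    · obtain ⟨j, rfl⟩ : ∃ j, k = j + 1 := ⟨k - 1, by omega⟩
      dsimp only
      rw [if_neg hk, map_add, PowerSeries.coeff_one, if_neg hk, PowerSeries.coeff_mk, zero_add]
      simp only [Polynomial.coe_mul, Polynomial.coe_pow, Polynomial.coe_add,
        Polynomial.coe_one, Polynomial.coe_X, Polynomial.coe_C, Nat.add_sub_cancel]
      rw [pow_succ]
      ring
  · intro k
    match k with
    | 0 => simp
    | 1 =>
      simp [PowerSeries.coeff_one, Nat.factorial]
    | (j+2) =>
      have h1 : PowerSeries.coeff (j+2) (1 - PowerSeries.C γ * PowerSeries.X) = 0 := by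
        simp [PowerSeries.coeff_one, PowerSeries.coeff_X]
      rw [h1]
      simp [Nat.add_sub_cancel, zero_pow]

theorem Pgood_prod [Field K] {ι : Type*} (s : Finset ι) (γ : ι → K) :
    Pgood s.card
      (∏ i ∈ s, (1 + PowerSeries.mk fun m =>
        (PowerSeries.X : PowerSeries K) * PowerSeries.C (γ i ^ m / (m.factorial : K))))
      (∏ i ∈ s, (1 - PowerSeries.C (γ i) * PowerSeries.X)) := by
  induction s using Finset.cons_induction with
  | empty => simpa using Pgood_one
  | cons i s hi ih =>
    rw [Finset.prod_cons, Finset.prod_cons, Finset.card_cons, add_comm s.card 1]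
    exact Pgood_mul (Pgood_factor (γ i)) ih

/-- The coefficient polynomials of the quotient, defined by the division recursion. -/
noncomputable def aPoly [Field K] (pA pB : ℕ → Polynomial K) : ℕ → Polynomial K
  | k => pA k - ∑ j : Fin k, pB (j + 1) * aPoly pA pB (k - 1 - j)
  decreasing_by have := j.isLt; omega

theorem aPoly_degree [Field K] {pA pB : ℕ → Polynomial K}
    (hA : ∀ k : ℕ, (pA k).degree ≤ (k : ℕ)) (hB : ∀ k : ℕ, (pB k).degree ≤ (k : ℕ)) :
    ∀ k : ℕ, (aPoly pA pB k).degree ≤ (k : ℕ) := by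
  intro k
  induction k using Nat.strong_induction_on with
  | _ k ih =>
    rw [aPoly]
    refine (Polynomial.degree_sub_le _ _).trans ?_
    refine max_le (hA k) ?_
    refine (Polynomial.degree_sum_le _ _).trans ?_
    simp only [Finset.sup_le_iff, Finset.mem_univ, forall_true_left]
    intro j
    refine (Polynomial.degree_mul_le _ _).trans ?_
    have hj : (j : ℕ) < k := j.isLt
    calc (pB (j + 1)).degree + (aPoly pA pB (k - 1 - j)).degree
        ≤ ((j : ℕ) + 1 : ℕ) + ((k - 1 - (j : ℕ) : ℕ) : WithBot ℕ) :=
          add_le_add (hB _) (ih _ (by omega))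
      _ ≤ (k : ℕ) := by norm_cast; omega

end CserAux



open CserAux in
/-- write `C(t,u) = F_α(t,u)/F_β(t,u)` (i.e. `F_α = F_β ⬝ Cser`).
Then `C(t,u) = Σ_k (1+u)^{r-k} a_k(u) t^k` with `deg a_k ≤ k`, and
`Σ_k a_k(-1) t^k = E_α(-t) H_β(t)`, i.e.
`(Σ_k a_k(-1) t^k) ⬝ ∏_j (1-β_j t) = ∏_i (1-α_i t)`. -/
theorem Cser_structure [Field K] [CharZero K] {n r : ℕ} (hrn : r ≤ n)
    (α : Fin n → K) (β : Fin (n - r) → K)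
    (Cser : PowerSeries (PowerSeries K))
    (hC : Fser α = Fser β * Cser) :
    ∃ a : ℕ → Polynomial K,
      (∀ k : ℕ, (a k).degree ≤ (k : ℕ)) ∧
      Cser = (PowerSeries.mk fun k =>
        (1 + PowerSeries.X : PowerSeries K) ^ r *
          ((1 + PowerSeries.X : PowerSeries K) ^ k)⁻¹ * ((a k : Polynomial K) : PowerSeries K)) ∧
      (PowerSeries.mk fun k => (a k).eval (-1)) *
          (∏ j : Fin (n - r), (1 - PowerSeries.C (β j) * PowerSeries.X)) =
        ∏ i : Fin n, (1 - PowerSeries.C (α i) * PowerSeries.X) := by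
  have hA : Pgood n (Fser α) (∏ i : Fin n, (1 - PowerSeries.C (α i) * PowerSeries.X)) := by
    simpa [Fser, Finset.card_univ] using Pgood_prod (Finset.univ : Finset (Fin n)) α
  have hB : Pgood (n - r) (Fser β)
      (∏ j : Fin (n - r), (1 - PowerSeries.C (β j) * PowerSeries.X)) := by
    simpa [Fser, Finset.card_univ] using Pgood_prod (Finset.univ : Finset (Fin (n - r))) β
  obtain ⟨pA, hAd, hAc, hAe⟩ := hA
  obtain ⟨pB, hBd, hBc, hBe⟩ := hB
  -- basic non-vanishing facts
  have hne : (1 + PowerSeries.X : PowerSeries K) ≠ 0 := by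
    intro h
    have := congrArg (PowerSeries.constantCoeff) h
    simp at this
  have hpowne : ∀ m : ℕ, (1 + PowerSeries.X : PowerSeries K) ^ m ≠ 0 :=
    fun m => pow_ne_zero m hne
  have hPow : (1 + PowerSeries.X : PowerSeries K) ^ (n - r) * (1 + PowerSeries.X) ^ r
      = (1 + PowerSeries.X) ^ n := by
    rw [← pow_add, Nat.sub_add_cancel hrn]
  -- the constant coefficient of `Fser β` is `(1+u)^{n-r}`, hence `pB 0 = 1`
  have hc0 : PowerSeries.coeff 0 (Fser β)
      = (1 + PowerSeries.X : PowerSeries K) ^ (n - r) := by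
    rw [PowerSeries.coeff_zero_eq_constantCoeff, Fser, map_prod]
    have h1 : ∀ i : Fin (n - r), PowerSeries.constantCoeff
        (1 + PowerSeries.mk fun m =>
          (PowerSeries.X : PowerSeries K) * PowerSeries.C (β i ^ m / (m.factorial : K)))
        = 1 + PowerSeries.X := by
      intro i
      rw [map_add, PowerSeries.constantCoeff_mk]
      simp
    rw [Finset.prod_congr rfl fun i _ => h1 i, Finset.prod_const, Finset.card_univ,
      Fintype.card_fin]
  have hpB0 : pB 0 = 1 := by
    have h0 := hBc 0
    rw [pow_zero, one_mul, hc0] at h0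
    have h1 : (1 + PowerSeries.X : PowerSeries K) ^ (n - r) * 1
        = (1 + PowerSeries.X) ^ (n - r) * ((pB 0 : Polynomial K) : PowerSeries K) := by
      rw [mul_one]; exact h0
    have h2 := mul_left_cancel₀ (hpowne (n - r)) h1
    exact Polynomial.coe_eq_one_iff.mp h2.symm
  -- unfolding of the coercion of `aPoly`
  have hsplit : ∀ k : ℕ, ((aPoly pA pB k : Polynomial K) : PowerSeries K)
      = ((pA k : Polynomial K) : PowerSeries K) - ∑ i ∈ Finset.range k,
        ((pB (i+1) : Polynomial K) : PowerSeries K) *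
          ((aPoly pA pB (k - 1 - i) : Polynomial K) : PowerSeries K) := by
    intro k
    rw [aPoly]
    simp only [← Polynomial.coeToPowerSeries.ringHom_apply, map_sub, map_sum, map_mul,
      Fin.sum_univ_eq_sum_range (fun i => Polynomial.coeToPowerSeries.ringHom (pB (i+1)) *
        Polynomial.coeToPowerSeries.ringHom (aPoly pA pB (k - 1 - i)))]
  -- the key coefficient identity
  have key : ∀ k : ℕ, (1 + PowerSeries.X : PowerSeries K) ^ k *
      PowerSeries.coeff k Cser
      = (1 + PowerSeries.X) ^ r * ((aPoly pA pB k : Polynomial K) : PowerSeries K) := by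
    intro k
    induction k using Nat.strong_induction_on with
    | _ k ih =>
      have hmul := congrArg (PowerSeries.coeff k) hC
      rw [PowerSeries.coeff_mul, Finset.Nat.sum_antidiagonal_eq_sum_range_succ_mk,
        Finset.sum_range_succ'] at hmul
      have hmul2 := congrArg (fun z => (1 + PowerSeries.X : PowerSeries K) ^ k * z) hmul
      simp only [mul_add, Finset.mul_sum] at hmul2
      rw [hAc k] at hmul2
      have hterm : ∀ i ∈ Finset.range k,
          (1 + PowerSeries.X : PowerSeries K) ^ k *
            (PowerSeries.coeff (i+1) (Fser β) *
             PowerSeries.coeff (k - (i+1)) Cser)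
          = (1 + PowerSeries.X) ^ n *
            (((pB (i+1) : Polynomial K) : PowerSeries K) *
             ((aPoly pA pB (k - 1 - i) : Polynomial K) : PowerSeries K)) := by
        intro i hi
        simp only [Finset.mem_range] at hi
        have hsplitpow : (1 + PowerSeries.X : PowerSeries K) ^ k
            = (1 + PowerSeries.X) ^ (i+1) * (1 + PowerSeries.X) ^ (k - (i+1)) := by
          rw [← pow_add]; congr 1; omega
        have hki : k - (i+1) = k - 1 - i := by omega
        rw [hsplitpow, mul_mul_mul_comm, hBc (i+1), hki, ih (k - 1 - i) (by omega), ← hPow]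
        ring
      rw [Finset.sum_congr rfl hterm, Nat.sub_zero, hc0] at hmul2
      -- hmul2 : (1+X)^n pA_k = Σ (1+X)^n (pB a) + (1+X)^{n-r} ((1+X)^k coeff_k C)
      refine mul_left_cancel₀ (hpowne (n - r)) ?_
      have hlhs : (1 + PowerSeries.X : PowerSeries K) ^ (n - r) *
          ((1 + PowerSeries.X) ^ k * PowerSeries.coeff k Cser)
          = (1 + PowerSeries.X) ^ n * ((pA k : Polynomial K) : PowerSeries K)
            - ∑ i ∈ Finset.range k, (1 + PowerSeries.X) ^ n *
              (((pB (i+1) : Polynomial K) : PowerSeries K) *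
               ((aPoly pA pB (k - 1 - i) : Polynomial K) : PowerSeries K)) := by
        linear_combination -hmul2
      rw [hlhs, ← mul_assoc, hPow, hsplit k, mul_sub, Finset.mul_sum]
  refine ⟨aPoly pA pB, aPoly_degree hAd hBd, ?_, ?_⟩
  · refine PowerSeries.ext fun k => ?_
    rw [PowerSeries.coeff_mk]
    have hinv : ((1 + PowerSeries.X : PowerSeries K) ^ k)⁻¹ * (1 + PowerSeries.X) ^ k = 1 := by
      refine PowerSeries.inv_mul_cancel _ ?_
      simp
    calc PowerSeries.coeff k Cser
        = ((1 + PowerSeries.X : PowerSeries K) ^ k)⁻¹ *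
          ((1 + PowerSeries.X) ^ k * PowerSeries.coeff k Cser) := by
          rw [← mul_assoc, hinv, one_mul]
      _ = ((1 + PowerSeries.X : PowerSeries K) ^ k)⁻¹ *
          ((1 + PowerSeries.X) ^ r * ((aPoly pA pB k : Polynomial K) : PowerSeries K)) := by
          rw [key k]
      _ = (1 + PowerSeries.X : PowerSeries K) ^ r *
          ((1 + PowerSeries.X : PowerSeries K) ^ k)⁻¹ *
          ((aPoly pA pB k : Polynomial K) : PowerSeries K) := by ring
  · ext k
    rw [PowerSeries.coeff_mul, Finset.Nat.sum_antidiagonal_eq_sum_range_succ_mk]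
    simp only [PowerSeries.coeff_mk]
    rw [Finset.sum_range_succ, Nat.sub_self, hBe 0, hpB0, Polynomial.eval_one, mul_one,
      hAe k]
    -- evaluate the recursion at -1
    have heval : (aPoly pA pB k).eval (-1)
        = (pA k).eval (-1) - ∑ j ∈ Finset.range k,
            (pB (j+1)).eval (-1) * (aPoly pA pB (k - 1 - j)).eval (-1) := by
      rw [aPoly, Polynomial.eval_sub,
        Fin.sum_univ_eq_sum_range (fun j => pB (j+1) * aPoly pA pB (k - 1 - j)),
        Polynomial.eval_finset_sum]
      simp only [Polynomial.eval_mul]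
    have hswap : ∑ j ∈ Finset.range k, (pB (j+1)).eval (-1) *
          (aPoly pA pB (k - 1 - j)).eval (-1)
        = ∑ i ∈ Finset.range k, (aPoly pA pB i).eval (-1) *
            (PowerSeries.coeff (k - i)
              (∏ j : Fin (n - r), (1 - PowerSeries.C (β j) * PowerSeries.X))) := by
      rw [← Finset.sum_range_reflect (fun i => (aPoly pA pB i).eval (-1) *
        (PowerSeries.coeff (k - i)
          (∏ j : Fin (n - r), (1 - PowerSeries.C (β j) * PowerSeries.X)))) k]
      refine Finset.sum_congr rfl fun j hj => ?_
      simp only [Finset.mem_range] at hj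
      have h1 : k - (k - 1 - j) = j + 1 := by omega
      rw [h1, hBe (j+1), mul_comm]
    rw [heval, hswap]
    ring
end

section
/- Let A = ℚ(α,β)[t]/(t^{d+1}) and let C̄(t,u) denote the image in A[[u]] of C(t,u) = F_α(t,u)/F_β(t,u), where α has n variables and β has n−r variables with r ≥ d. Then C̄(t,u) is a polynomial in u of degree at most r. -/
open PowerSeries

variable {K : Type*}

namespace CserAux

variable [Field K]

/-- `p` is a polynomial in `u` of degree at most `k`. -/
def DegLe (k : ℕ) (p : PowerSeries K) : Prop :=
  ∀ m, k < m → PowerSeries.coeff m p = 0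

lemma DegLe.mono {k k' : ℕ} (h : k ≤ k') {p : PowerSeries K} (hp : DegLe k p) :
    DegLe k' p := fun m hm => hp m (lt_of_le_of_lt h hm)

lemma degLe_zero (k : ℕ) : DegLe k (0 : PowerSeries K) := fun m _ => by simp

lemma degLe_one : DegLe 0 (1 : PowerSeries K) := fun m hm => by
  simp [PowerSeries.coeff_one, hm.ne']

lemma degLe_C (c : K) : DegLe 0 (PowerSeries.C c) := fun m hm => by
  simp [PowerSeries.coeff_C, hm.ne']

lemma degLe_X : DegLe 1 (PowerSeries.X : PowerSeries K) := fun m hm => by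
  simp [PowerSeries.coeff_X, hm.ne']

lemma DegLe.mul {k l : ℕ} {p q : PowerSeries K} (hp : DegLe k p) (hq : DegLe l q) :
    DegLe (k + l) (p * q) := by
  intro m hm
  rw [PowerSeries.coeff_mul]
  apply Finset.sum_eq_zero
  rintro ⟨i, j⟩ hij
  rw [Finset.HasAntidiagonal.mem_antidiagonal] at hij
  rcases le_or_gt i k with hi | hi
  · have hj : l < j := by omega
    simp [hq j hj]
  · simp [hp i hi]

lemma DegLe.sub {k : ℕ} {p q : PowerSeries K} (hp : DegLe k p) (hq : DegLe k q) :
    DegLe k (p - q) := fun m hm => by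
  simp [map_sub, hp m hm, hq m hm]

lemma degLe_sum {ι : Type*} {k : ℕ} {s : Finset ι} {f : ι → PowerSeries K}
    (h : ∀ x ∈ s, DegLe k (f x)) : DegLe k (∑ x ∈ s, f x) := fun m hm => by
  rw [map_sum]
  exact Finset.sum_eq_zero fun x hx => h x hx m hm

lemma degLe_onePlusX : DegLe 1 (1 + PowerSeries.X : PowerSeries K) := fun m hm => by
  have h0 : m ≠ 0 := by omega
  simp [PowerSeries.coeff_one, PowerSeries.coeff_X, hm.ne', h0]

lemma degLe_onePlusX_pow (k : ℕ) :
    DegLe k ((1 + PowerSeries.X : PowerSeries K) ^ k) := by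
  induction k with
  | zero => simpa using degLe_one
  | succ k ih => rw [pow_succ]; exact ih.mul degLe_onePlusX

lemma one_add_X_ne_zero : (1 + PowerSeries.X : PowerSeries K) ≠ 0 := by
  intro h
  have := congrArg (PowerSeries.constantCoeff) h
  simp at this

/-- One factor of `Fser`. -/
noncomputable def fac {n : ℕ} (γ : Fin n → K) (i : Fin n) :
    PowerSeries (PowerSeries K) :=
  1 + PowerSeries.mk fun m =>
    (PowerSeries.X : PowerSeries K) * PowerSeries.C (γ i ^ m / (m.factorial : K))

lemma Fser_eq {n : ℕ} (γ : Fin n → K) : Fser γ = ∏ i : Fin n, fac γ i := rfl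

lemma coeff_fac {n : ℕ} (γ : Fin n → K) (i : Fin n) (l : ℕ) :
    PowerSeries.coeff l (fac γ i) =
      if l = 0 then 1 + PowerSeries.X
      else PowerSeries.X * PowerSeries.C (γ i ^ l / (l.factorial : K)) := by
  rcases l with _ | l
  · simp [fac, PowerSeries.coeff_mk]
  · simp [fac, PowerSeries.coeff_mk, PowerSeries.coeff_one]

/-- Key structural lemma: the `t^k` coefficient of a product of factors over `s`
times `(1+u)^k` equals `(1+u)^{|s|}` times a polynomial of degree `≤ k`. -/
lemma key {n : ℕ} (γ : Fin n → K) (s : Finset (Fin n)) (k : ℕ) :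
    ∃ p : PowerSeries K, DegLe k p ∧
      PowerSeries.coeff k (∏ i ∈ s, fac γ i) *
          (1 + PowerSeries.X) ^ k
        = (1 + PowerSeries.X) ^ s.card * p := by
  classical
  induction s using Finset.induction_on generalizing k with
  | empty =>
    rcases Nat.eq_zero_or_pos k with rfl | hk
    · exact ⟨1, degLe_one, by simp⟩
    · refine ⟨0, degLe_zero _, ?_⟩
      simp [PowerSeries.coeff_one, hk.ne']
  | @insert a s ha ih =>
    choose p hp1 hp2 using ih
    set g : ℕ → PowerSeries K := fun l =>
      if l = 0 then 1
      else PowerSeries.X * PowerSeries.C (γ a ^ l / (l.factorial : K)) *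
        (1 + PowerSeries.X) ^ (l - 1) with hgdef
    have hg1 : ∀ l, DegLe l (g l) := by
      intro l
      rcases l with _ | l
      · simpa [hgdef] using degLe_one
      · have : DegLe (1 + 0 + l) (PowerSeries.X *
            PowerSeries.C (γ a ^ (l+1) / ((l+1).factorial : K)) *
            (1 + PowerSeries.X) ^ l) :=
          (degLe_X.mul (degLe_C _)).mul (degLe_onePlusX_pow l)
        have he : 1 + 0 + l = l + 1 := by omega
        rw [he] at this
        simpa [hgdef] using this
    have hg2 : ∀ l, PowerSeries.coeff l (fac γ a) *
        (1 + PowerSeries.X) ^ l = (1 + PowerSeries.X) * g l := by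
      intro l
      rcases l with _ | l
      · simp [coeff_fac, hgdef]
      · simp only [coeff_fac, hgdef]
        rw [if_neg (by omega), if_neg (by omega)]
        have : l + 1 - 1 = l := by omega
        rw [this, pow_succ]
        ring
    refine ⟨∑ x ∈ Finset.HasAntidiagonal.antidiagonal k, g x.1 * p x.2, ?_, ?_⟩
    · apply degLe_sum
      rintro ⟨i, j⟩ hx
      rw [Finset.HasAntidiagonal.mem_antidiagonal] at hx
      have : DegLe (i + j) (g i * p j) := (hg1 i).mul (hp1 j)
      rwa [hx] at this
    · rw [Finset.prod_insert ha, Finset.card_insert_of_notMem ha,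
        PowerSeries.coeff_mul, Finset.sum_mul, Finset.mul_sum]
      apply Finset.sum_congr rfl
      rintro ⟨i, j⟩ hx
      rw [Finset.HasAntidiagonal.mem_antidiagonal] at hx
      have h1 : (1 + PowerSeries.X : PowerSeries K) ^ k =
          (1 + PowerSeries.X) ^ i * (1 + PowerSeries.X) ^ j := by
        rw [← pow_add, hx]
      calc PowerSeries.coeff i (fac γ a) *
            PowerSeries.coeff j (∏ i ∈ s, fac γ i) *
            (1 + PowerSeries.X) ^ k
          = (PowerSeries.coeff i (fac γ a) * (1 + PowerSeries.X) ^ i) *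
            (PowerSeries.coeff j (∏ i ∈ s, fac γ i) *
              (1 + PowerSeries.X) ^ j) := by rw [h1]; ring
        _ = ((1 + PowerSeries.X) * g i) * ((1 + PowerSeries.X) ^ s.card * p j) := by
            rw [hg2 i, hp2 j]
        _ = (1 + PowerSeries.X) ^ (s.card + 1) * (g i * p j) := by
            rw [pow_succ]; ring

lemma keyF {n : ℕ} (γ : Fin n → K) (k : ℕ) :
    ∃ p : PowerSeries K, DegLe k p ∧
      PowerSeries.coeff k (Fser γ) * (1 + PowerSeries.X) ^ k
        = (1 + PowerSeries.X) ^ n * p := by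
  simpa [Fser_eq, Finset.card_univ] using key γ Finset.univ k

lemma constCoeff_Fser {n : ℕ} (γ : Fin n → K) :
    PowerSeries.coeff 0 (Fser γ) = (1 + PowerSeries.X) ^ n := by
  rw [Fser_eq, PowerSeries.coeff_zero_eq_constantCoeff, map_prod]
  have h : ∀ i : Fin n, PowerSeries.constantCoeff (fac γ i) =
      1 + PowerSeries.X := by
    intro i
    have := congrArg (fun f => f) (coeff_fac γ i 0)
    simpa [PowerSeries.coeff_zero_eq_constantCoeff] using coeff_fac γ i 0
  rw [Finset.prod_congr rfl (fun i _ => h i), Finset.prod_const, Finset.card_univ,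
    Fintype.card_fin]

end CserAux

/-- if `r ≥ d`, then the image `C̄(t,u)` of `C(t,u) = F_α/F_β` in
`(K[t]/(t^{d+1}))[[u]]` is a polynomial in `u` of degree at most `r`; that is,
the coefficient of `t^k u^m` in `C(t,u)` vanishes whenever `k ≤ d` and `m > r`. -/
theorem Cser_trunc_polynomial_in_u [Field K] [CharZero K] {n r d : ℕ}
    (hrn : r ≤ n) (hdr : d ≤ r)
    (α : Fin n → K) (β : Fin (n - r) → K)
    (Cser : PowerSeries (PowerSeries K))
    (hC : Fser α = Fser β * Cser) :
    ∀ k ≤ d, ∀ m : ℕ, r < m →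
      PowerSeries.coeff m (PowerSeries.coeff k Cser) = 0 := by
  classical
  open CserAux in
  have hpow : (1 + PowerSeries.X : PowerSeries K) ^ n =
      (1 + PowerSeries.X) ^ (n - r) * (1 + PowerSeries.X) ^ r := by
    rw [← pow_add]
    congr 1
    omega
  choose b hb1 hb2 using fun j => CserAux.keyF β j
  have main : ∀ k, ∃ q : PowerSeries K, CserAux.DegLe k q ∧
      PowerSeries.coeff k Cser * (1 + PowerSeries.X) ^ k
        = (1 + PowerSeries.X) ^ r * q := by
    intro k
    induction k using Nat.strong_induction_on with
    | _ k IH =>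
    choose q hq1 hq2 using IH
    set Q : ℕ → PowerSeries K := fun l => if h : l < k then q l h else 0 with hQdef
    have hQ1 : ∀ l, l < k → CserAux.DegLe l (Q l) := by
      intro l h
      simpa [hQdef, dif_pos h] using hq1 l h
    have hQ2 : ∀ l, l < k →
        PowerSeries.coeff l Cser * (1 + PowerSeries.X) ^ l
          = (1 + PowerSeries.X) ^ r * Q l := by
      intro l h
      simpa [hQdef, dif_pos h] using hq2 l h
    obtain ⟨a, ha1, ha2⟩ := CserAux.keyF α k
    have hmem : ((0 : ℕ), k) ∈ Finset.HasAntidiagonal.antidiagonal k := by simp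
    set S := (Finset.HasAntidiagonal.antidiagonal k).erase (0, k) with hS
    have hEq : PowerSeries.coeff k (Fser α)
        = PowerSeries.coeff 0 (Fser β) *
            PowerSeries.coeff k Cser
          + ∑ x ∈ S, PowerSeries.coeff x.1 (Fser β) *
              PowerSeries.coeff x.2 Cser := by
      rw [hC, PowerSeries.coeff_mul, ← Finset.add_sum_erase _ _ hmem]
    have hterm : ∀ x ∈ S,
        (PowerSeries.coeff x.1 (Fser β) *
          PowerSeries.coeff x.2 Cser) * (1 + PowerSeries.X) ^ k
        = (1 + PowerSeries.X) ^ (n - r) *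
            ((1 + PowerSeries.X) ^ r * (b x.1 * Q x.2)) := by
      rintro ⟨i, j⟩ hx
      have hne : (i, j) ≠ ((0 : ℕ), k) := (Finset.mem_erase.mp hx).1
      have hij : i + j = k := Finset.HasAntidiagonal.mem_antidiagonal.mp (Finset.mem_erase.mp hx).2
      have hi : i ≠ 0 := by
        intro h
        exact hne (by simp [h, ← hij])
      have hj : j < k := by omega
      have h1 : (1 + PowerSeries.X : PowerSeries K) ^ k =
          (1 + PowerSeries.X) ^ i * (1 + PowerSeries.X) ^ j := by
        rw [← pow_add, hij]
      calc (PowerSeries.coeff i (Fser β) *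
            PowerSeries.coeff j Cser) * (1 + PowerSeries.X) ^ k
          = (PowerSeries.coeff i (Fser β) * (1 + PowerSeries.X) ^ i) *
            (PowerSeries.coeff j Cser * (1 + PowerSeries.X) ^ j) := by
            rw [h1]; ring
        _ = ((1 + PowerSeries.X) ^ (n - r) * b i) *
            ((1 + PowerSeries.X) ^ r * Q j) := by rw [hb2 i, hQ2 j hj]
        _ = (1 + PowerSeries.X) ^ (n - r) *
            ((1 + PowerSeries.X) ^ r * (b i * Q j)) := by ring
    refine ⟨a - ∑ x ∈ S, b x.1 * Q x.2, ?_, ?_⟩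
    · apply CserAux.DegLe.sub ha1
      apply CserAux.degLe_sum
      rintro ⟨i, j⟩ hx
      have hne : (i, j) ≠ ((0 : ℕ), k) := (Finset.mem_erase.mp hx).1
      have hij : i + j = k := Finset.HasAntidiagonal.mem_antidiagonal.mp (Finset.mem_erase.mp hx).2
      have hi : i ≠ 0 := by
        intro h
        exact hne (by simp [h, ← hij])
      have hj : j < k := by omega
      have : CserAux.DegLe (i + j) (b i * Q j) := (hb1 i).mul (hQ1 j hj)
      rwa [hij] at this
    · apply mul_left_cancel₀
        (pow_ne_zero (n - r) (CserAux.one_add_X_ne_zero (K := K)))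
      have hB0 : PowerSeries.coeff 0 (Fser β) =
          (1 + PowerSeries.X) ^ (n - r) := CserAux.constCoeff_Fser β
      calc (1 + PowerSeries.X : PowerSeries K) ^ (n - r) *
            (PowerSeries.coeff k Cser * (1 + PowerSeries.X) ^ k)
          = (PowerSeries.coeff 0 (Fser β) *
              PowerSeries.coeff k Cser) * (1 + PowerSeries.X) ^ k := by
            rw [hB0]; ring
        _ = (PowerSeries.coeff k (Fser α)
              - ∑ x ∈ S, PowerSeries.coeff x.1 (Fser β) *
                  PowerSeries.coeff x.2 Cser) *
            (1 + PowerSeries.X) ^ k := by rw [hEq]; ring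
        _ = PowerSeries.coeff k (Fser α) * (1 + PowerSeries.X) ^ k
            - ∑ x ∈ S, (PowerSeries.coeff x.1 (Fser β) *
                PowerSeries.coeff x.2 Cser) * (1 + PowerSeries.X) ^ k := by
            rw [sub_mul, Finset.sum_mul]
        _ = (1 + PowerSeries.X) ^ (n - r) * ((1 + PowerSeries.X) ^ r * a)
            - ∑ x ∈ S, (1 + PowerSeries.X) ^ (n - r) *
                ((1 + PowerSeries.X) ^ r * (b x.1 * Q x.2)) := by
            rw [ha2, hpow, Finset.sum_congr rfl hterm]; ring
        _ = (1 + PowerSeries.X) ^ (n - r) *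
            ((1 + PowerSeries.X) ^ r * (a - ∑ x ∈ S, b x.1 * Q x.2)) := by
            rw [← Finset.mul_sum, ← Finset.mul_sum, mul_sub, mul_sub]
  intro k hk m hm
  obtain ⟨q, hq1, hq2⟩ := main k
  have hkr : k ≤ r := le_trans hk hdr
  have hsplit : (1 + PowerSeries.X : PowerSeries K) ^ r =
      (1 + PowerSeries.X) ^ k * (1 + PowerSeries.X) ^ (r - k) := by
    rw [← pow_add]
    congr 1
    omega
  have hc : PowerSeries.coeff k Cser * (1 + PowerSeries.X) ^ k
      = ((1 + PowerSeries.X) ^ (r - k) * q) * (1 + PowerSeries.X) ^ k := by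
    rw [hq2, hsplit]; ring
  have hCk : PowerSeries.coeff k Cser =
      (1 + PowerSeries.X) ^ (r - k) * q :=
    mul_right_cancel₀ (pow_ne_zero k (CserAux.one_add_X_ne_zero (K := K))) hc
  have hd : CserAux.DegLe ((r - k) + k)
      ((1 + PowerSeries.X : PowerSeries K) ^ (r - k) * q) :=
    (CserAux.degLe_onePlusX_pow _).mul hq1
  have he : (r - k) + k = r := by omega
  rw [hCk]
  exact (he ▸ hd) m hm
end

section
/- (Borel–Serre type formula for Lebelt polynomials.) For r = d, the coefficient of t^d in Σ_{p=0}^{d} (−1)^p L^p_{α,β} equals (−1)^d c_d, where c_d is the t^d-coefficient of E_α(t)/E_β(t) = ∏_{i=1}^n(1+α_i t)·∏_{i=1}^{n−d}(1−β_i t + β_i² t² − ⋯), computed in ℚ(α,β)[t]/(t^{d+1}). -/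
open PowerSeries

variable {K : Type*}

namespace LebeltAux

variable (K) in
/-- `V = u/(1+u)`. -/
noncomputable def Vv [Field K] : PowerSeries K := X * (1 + X)⁻¹

variable [Field K]

lemma constantCoeff_oneX : constantCoeff (R := K) (1 + X) = 1 := by
  simp

lemma oneX_mul_Vv : (1 + X) * Vv K = X := by
  rw [Vv, ← mul_assoc, mul_comm (1 + X) X, mul_assoc,
    PowerSeries.mul_inv_cancel _ (by simp : constantCoeff (R := K) (1 + X) ≠ 0), mul_one]

variable (K) in
/-- span of `V^m`, `m < k`. -/
noncomputable def N (k : ℕ) : Submodule K (PowerSeries K) :=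
  Submodule.span K ((fun m => Vv K ^ m) '' Set.Iio k)

lemma N_zero : N K 0 = ⊥ := by
  have : Set.Iio 0 = (∅ : Set ℕ) := by ext; simp
  simp [N, this]

lemma pow_mem_N {m k : ℕ} (h : m < k) : Vv K ^ m ∈ N K k :=
  Submodule.subset_span ⟨m, h, rfl⟩

lemma N_mono {i j : ℕ} (h : i ≤ j) : N K i ≤ N K j :=
  Submodule.span_mono (Set.image_mono (Set.Iio_subset_Iio h))

lemma pow_mul_mem_N {i j : ℕ} {b : PowerSeries K} (hb : b ∈ N K j) :
    Vv K ^ i * b ∈ N K (i + j) := by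
  induction hb using Submodule.span_induction with
  | mem x hx =>
    obtain ⟨m, hm, rfl⟩ := hx
    rw [Set.mem_Iio] at hm
    rw [← pow_add]
    exact pow_mem_N (by omega)
  | zero => simp
  | add x y hx hy ihx ihy => rw [mul_add]; exact Submodule.add_mem _ ihx ihy
  | smul a x hx ih => rw [mul_smul_comm]; exact Submodule.smul_mem _ _ ih

lemma mem_N_mul_mem_N {i j : ℕ} {a b : PowerSeries K} (ha : a ∈ N K i) (hb : b ∈ N K j) :
    a * b ∈ N K (i + j) := by
  induction ha using Submodule.span_induction with
  | mem x hx =>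
    obtain ⟨m, hm, rfl⟩ := hx
    rw [Set.mem_Iio] at hm
    exact N_mono (by omega) (pow_mul_mem_N hb)
  | zero => simp
  | add x y hx hy ihx ihy => rw [add_mul]; exact Submodule.add_mem _ ihx ihy
  | smul a x hx ih => rw [smul_mul_assoc]; exact Submodule.smul_mem _ _ ih

/-- The key predicate: `coeff k F ≡ (coeff k g) V^k` modulo lower powers of `V`. -/
def Q (F : PowerSeries (PowerSeries K)) (g : PowerSeries K) : Prop :=
  ∀ k, PowerSeries.coeff (R := PowerSeries K) k F - PowerSeries.coeff (R := K) k g • Vv K ^ k ∈ N K k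

lemma Q_one : Q (1 : PowerSeries (PowerSeries K)) (1 : PowerSeries K) := by
  intro k
  rcases Nat.eq_zero_or_pos k with rfl | hk
  · simp
  · rw [PowerSeries.coeff_one, PowerSeries.coeff_one, if_neg (by omega), if_neg (by omega)]
    simpa using Submodule.zero_mem _

lemma Q_mul_aux {i j k : ℕ} (hij : i + j = k) {A B : PowerSeries K} {x y : K}
    (hA : A - x • Vv K ^ i ∈ N K i) (hB : B - y • Vv K ^ j ∈ N K j) :
    A * B - (x * y) • Vv K ^ k ∈ N K k := by
  have key : A * B - (x * y) • Vv K ^ k =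
      (A - x • Vv K ^ i) * (B - y • Vv K ^ j)
      + x • (Vv K ^ i * (B - y • Vv K ^ j))
      + y • ((A - x • Vv K ^ i) * Vv K ^ j) := by
    subst hij
    rw [pow_add]
    simp only [smul_eq_C_mul, map_mul]
    ring
  rw [key]
  subst hij
  exact Submodule.add_mem _
    (Submodule.add_mem _ (mem_N_mul_mem_N hA hB) (Submodule.smul_mem _ _ (pow_mul_mem_N hB)))
    (Submodule.smul_mem _ _ (by
      have := mem_N_mul_mem_N hA (Submodule.zero_mem (N K 0))
      -- a ∈ N i times V^j : commute
      rw [mul_comm]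
      exact N_mono (by omega) (pow_mul_mem_N hA)))

lemma Q_mul {F F' : PowerSeries (PowerSeries K)} {g g' : PowerSeries K}
    (hF : Q F g) (hF' : Q F' g') : Q (F * F') (g * g') := by
  intro k
  rw [PowerSeries.coeff_mul, PowerSeries.coeff_mul, Finset.sum_smul, ← Finset.sum_sub_distrib]
  refine Submodule.sum_mem _ fun p hp => ?_
  exact Q_mul_aux (Finset.HasAntidiagonal.mem_antidiagonal.mp hp) (hF p.1) (hF' p.2)

lemma Q_prod {ι : Type*} (s : Finset ι) (F : ι → PowerSeries (PowerSeries K))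
    (g : ι → PowerSeries K) (h : ∀ i ∈ s, Q (F i) (g i)) :
    Q (∏ i ∈ s, F i) (∏ i ∈ s, g i) := by
  classical
  induction s using Finset.induction_on with
  | empty => simpa using Q_one
  | insert a s hx ih =>
    rw [Finset.prod_insert hx, Finset.prod_insert hx]
    exact Q_mul (h a (Finset.mem_insert_self a s))
      (ih fun i hi => h i (Finset.mem_insert_of_mem hi))

lemma Q_cancel {F H : PowerSeries (PowerSeries K)} {g h : PowerSeries K}
    (hF : Q F g) (hFH : Q (F * H) (g * h)) (hc : constantCoeff (R := PowerSeries K) F = 1) :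
    Q H h := by
  have hF0 : PowerSeries.coeff (R := PowerSeries K) 0 F = 1 := by
    rwa [PowerSeries.coeff_zero_eq_constantCoeff]
  have hg0 : PowerSeries.coeff (R := K) 0 g = 1 := by
    have h0 := hF 0
    rw [N_zero, Submodule.mem_bot, sub_eq_zero, hF0, pow_zero,
      PowerSeries.smul_eq_C_mul, mul_one] at h0
    have : PowerSeries.C (R := K) (1 : K) = PowerSeries.C (R := K) (PowerSeries.coeff (R := K) 0 g) := by
      rw [map_one, h0]
    exact (PowerSeries.C_injective this).symm
  intro k
  induction k using Nat.strong_induction_on with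
  | _ k ih =>
  have hmem : ((0 : ℕ), k) ∈ Finset.HasAntidiagonal.antidiagonal k := by simp
  have hsum := hFH k
  rw [PowerSeries.coeff_mul, PowerSeries.coeff_mul,
    ← Finset.add_sum_erase _ _ hmem, ← Finset.add_sum_erase _ _ hmem] at hsum
  simp only [hF0, hg0, one_mul] at hsum
  have hrest : ∑ p ∈ (Finset.HasAntidiagonal.antidiagonal k).erase (0, k),
      (PowerSeries.coeff (R := PowerSeries K) p.1 F * PowerSeries.coeff (R := PowerSeries K) p.2 H
        - (PowerSeries.coeff (R := K) p.1 g * PowerSeries.coeff (R := K) p.2 h) • Vv K ^ k) ∈ N K k := by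
    refine Submodule.sum_mem _ fun p hp => ?_
    have hpk : p.1 + p.2 = k := Finset.HasAntidiagonal.mem_antidiagonal.mp (Finset.mem_of_mem_erase hp)
    have hp1 : p.1 ≠ 0 := by
      intro h0
      apply Finset.notMem_erase p (Finset.HasAntidiagonal.antidiagonal k)
      have : p = (0, k) := by
        ext <;> simp [h0, ← hpk]
      rwa [← this] at hp
    have hp2 : p.2 < k := by omega
    exact Q_mul_aux hpk (hF p.1) (ih p.2 hp2)
  have hfinal : PowerSeries.coeff (R := PowerSeries K) k H - PowerSeries.coeff (R := K) k h • Vv K ^ k =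
      (PowerSeries.coeff (R := PowerSeries K) k H + ∑ p ∈ (Finset.HasAntidiagonal.antidiagonal k).erase (0, k),
          PowerSeries.coeff (R := PowerSeries K) p.1 F * PowerSeries.coeff (R := PowerSeries K) p.2 H
        - (PowerSeries.coeff (R := K) k h + ∑ p ∈ (Finset.HasAntidiagonal.antidiagonal k).erase (0, k),
          PowerSeries.coeff (R := K) p.1 g * PowerSeries.coeff (R := K) p.2 h) • Vv K ^ k)
      - ∑ p ∈ (Finset.HasAntidiagonal.antidiagonal k).erase (0, k),
          (PowerSeries.coeff (R := PowerSeries K) p.1 F * PowerSeries.coeff (R := PowerSeries K) p.2 H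
            - (PowerSeries.coeff (R := K) p.1 g * PowerSeries.coeff (R := K) p.2 h) • Vv K ^ k) := by
    rw [Finset.sum_sub_distrib, add_smul, Finset.sum_smul]
    abel
  rw [hfinal]
  exact Submodule.sub_mem _ hsum hrest

end LebeltAux

namespace LebeltAux
variable [Field K]

variable (K) in
/-- the exponential-type series `e^{ct}` with coefficients regarded as constants in `K[[u]]`. -/
noncomputable def Ee (c : K) : PowerSeries (PowerSeries K) :=
  PowerSeries.mk fun k => PowerSeries.C (R := K) (c ^ k / (k.factorial : K))

variable (K) in
noncomputable def Gf (c : K) : PowerSeries (PowerSeries K) :=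
  1 + (PowerSeries.C (R := PowerSeries K)) (Vv K) * (Ee K c - 1)

lemma coeff_Gf_zero (c : K) : PowerSeries.coeff (R := PowerSeries K) 0 (Gf K c) = 1 := by
  simp [Gf, Ee, PowerSeries.coeff_C_mul, PowerSeries.coeff_mk]

lemma coeff_Gf (c : K) {k : ℕ} (hk : k ≠ 0) :
    PowerSeries.coeff (R := PowerSeries K) k (Gf K c) =
      (c ^ k / (k.factorial : K)) • Vv K := by
  rw [smul_eq_C_mul, mul_comm]
  simp [Gf, Ee, PowerSeries.coeff_C_mul, PowerSeries.coeff_mk, PowerSeries.coeff_one, hk]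

lemma constantCoeff_Gf (c : K) : constantCoeff (R := PowerSeries K) (Gf K c) = 1 := by
  rw [← PowerSeries.coeff_zero_eq_constantCoeff]; exact coeff_Gf_zero c

lemma Q_factor (c : K) : Q (Gf K c) (1 + PowerSeries.C (R := K) c * X) := by
  intro k
  match k with
  | 0 =>
    rw [coeff_Gf_zero]
    have : PowerSeries.coeff (R := K) 0 (1 + PowerSeries.C (R := K) c * X) = 1 := by simp
    rw [this, pow_zero, one_smul, sub_self]
    exact Submodule.zero_mem _
  | 1 =>
    rw [coeff_Gf c one_ne_zero]
    have : PowerSeries.coeff (R := K) 1 (1 + PowerSeries.C (R := K) c * X) = c := by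
      simp [PowerSeries.coeff_one, PowerSeries.coeff_C_mul]
    rw [this, pow_one]
    simp
  | (m+2) =>
    rw [coeff_Gf c (by omega)]
    have : PowerSeries.coeff (R := K) (m+2) (1 + PowerSeries.C (R := K) c * X) = 0 := by
      simp [PowerSeries.coeff_one, PowerSeries.coeff_C_mul, PowerSeries.coeff_X]
    rw [this, zero_smul, sub_zero]
    exact Submodule.smul_mem _ _ (by simpa using pow_mem_N (by omega : 1 < m + 2))

/-- factorization of each `Fser`-factor. -/
lemma factor_eq (c : K) :
    (1 + PowerSeries.mk fun m =>
      (PowerSeries.X : PowerSeries K) * PowerSeries.C (R := K) (c ^ m / (m.factorial : K))) =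
    (PowerSeries.C (R := PowerSeries K)) (1 + X) * Gf K c := by
  have h1 : (PowerSeries.mk fun m =>
      (PowerSeries.X : PowerSeries K) * PowerSeries.C (R := K) (c ^ m / (m.factorial : K))) =
      (PowerSeries.C (R := PowerSeries K)) X * Ee K c := by
    ext k
    simp [Ee, PowerSeries.coeff_mk, PowerSeries.coeff_C_mul]
  have h2 : (PowerSeries.C (R := PowerSeries K)) (1 + X) * (PowerSeries.C (R := PowerSeries K)) (Vv K) =
      (PowerSeries.C (R := PowerSeries K)) X := by rw [← map_mul, oneX_mul_Vv]
  rw [h1, Gf, mul_add, mul_one, ← mul_assoc, h2, mul_sub, mul_one, map_add, map_one]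
  ring

lemma Fser_eq {m : ℕ} (γ : Fin m → K) :
    Fser γ = (PowerSeries.C (R := PowerSeries K)) ((1 + X) ^ m) * ∏ i : Fin m, Gf K (γ i) := by
  rw [Fser]
  have : ∀ i : Fin m, (1 + PowerSeries.mk fun k =>
      (PowerSeries.X : PowerSeries K) * PowerSeries.C (R := K) (γ i ^ k / (k.factorial : K))) =
      (PowerSeries.C (R := PowerSeries K)) (1 + X) * Gf K (γ i) := fun i => factor_eq (γ i)
  rw [Finset.prod_congr rfl fun i _ => this i, Finset.prod_mul_distrib, Finset.prod_const,
    Finset.card_univ, Fintype.card_fin, ← map_pow]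

end LebeltAux

namespace LebeltAux
variable [Field K]

lemma sum_coeff_poly (d : ℕ) (q : Polynomial K) (hq : q.natDegree < d + 1) :
    ∑ p ∈ Finset.range (d + 1), (-1 : K) ^ p * PowerSeries.coeff (R := K) p (q : PowerSeries K) =
      q.eval (-1) := by
  rw [Polynomial.eval_eq_sum_range' hq]
  exact Finset.sum_congr rfl fun p _ => by rw [Polynomial.coeff_coe]; ring

lemma natDegree_one_add_X : (1 + Polynomial.X : Polynomial K).natDegree = 1 := by
  rw [add_comm, ← Polynomial.C_1, Polynomial.natDegree_X_add_C]

lemma vanish (d : ℕ) {r : PowerSeries K} (hr : r ∈ N K d) :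
    ∑ p ∈ Finset.range (d + 1), (-1 : K) ^ p *
      PowerSeries.coeff (R := K) p ((1 + X) ^ d * r) = 0 := by
  induction hr using Submodule.span_induction with
  | mem x hx =>
    obtain ⟨m, hm, rfl⟩ := hx
    rw [Set.mem_Iio] at hm
    have hsplit : ((1 + X) ^ d * Vv K ^ m : PowerSeries K) =
        ((1 + Polynomial.X) ^ (d - m) * Polynomial.X ^ m : Polynomial K) := by
      push_cast
      have : ((1 + X) ^ d : PowerSeries K) = (1 + X) ^ (d - m) * (1 + X) ^ m := by
        rw [← pow_add, Nat.sub_add_cancel hm.le]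
      rw [this, mul_assoc, ← mul_pow, oneX_mul_Vv]
    rw [hsplit, sum_coeff_poly]
    · rw [Polynomial.eval_mul, Polynomial.eval_pow, Polynomial.eval_pow, Polynomial.eval_add,
        Polynomial.eval_one, Polynomial.eval_X]
      rw [show (1 : K) + (-1) = 0 by ring, zero_pow (by omega : d - m ≠ 0), zero_mul]
    · calc ((1 + Polynomial.X) ^ (d - m) * Polynomial.X ^ m : Polynomial K).natDegree
          ≤ ((1 + Polynomial.X : Polynomial K) ^ (d - m)).natDegree
            + ((Polynomial.X : Polynomial K) ^ m).natDegree := Polynomial.natDegree_mul_le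
        _ ≤ d := by
            rw [Polynomial.natDegree_pow, Polynomial.natDegree_pow, natDegree_one_add_X,
              Polynomial.natDegree_X]
            omega
        _ < d + 1 := by omega
  | zero => simp
  | add x y hx hy ihx ihy =>
    rw [mul_add]
    simp only [map_add]
    rw [Finset.sum_congr rfl fun p _ => (by ring :
      (-1 : K) ^ p * (PowerSeries.coeff (R := K) p ((1 + X) ^ d * x)
        + PowerSeries.coeff (R := K) p ((1 + X) ^ d * y)) =
      (-1 : K) ^ p * PowerSeries.coeff (R := K) p ((1 + X) ^ d * x)
        + (-1 : K) ^ p * PowerSeries.coeff (R := K) p ((1 + X) ^ d * y)),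
      Finset.sum_add_distrib, ihx, ihy, add_zero]
  | smul a x hx ih =>
    rw [mul_smul_comm]
    simp only [map_smul, smul_eq_mul]
    rw [Finset.sum_congr rfl fun p _ => (by ring :
      (-1 : K) ^ p * (a * PowerSeries.coeff (R := K) p ((1 + X) ^ d * x)) =
      a * ((-1 : K) ^ p * PowerSeries.coeff (R := K) p ((1 + X) ^ d * x))),
      ← Finset.mul_sum, ih, mul_zero]

lemma sum_coeff_top (d : ℕ) (e : K) :
    ∑ p ∈ Finset.range (d + 1), (-1 : K) ^ p *
      PowerSeries.coeff (R := K) p ((1 + X) ^ d * (e • Vv K ^ d)) = (-1) ^ d * e := by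
  have h1 : ((1 + X) ^ d * (e • Vv K ^ d) : PowerSeries K) = e • (X ^ d : PowerSeries K) := by
    rw [mul_smul_comm, ← mul_pow, oneX_mul_Vv]
  rw [h1]
  simp only [map_smul, smul_eq_mul, PowerSeries.coeff_X_pow]
  rw [Finset.sum_eq_single_of_mem d (Finset.self_mem_range_succ d)]
  · simp
  · intro b _ hb
    simp [hb]

end LebeltAux


open LebeltAux in
/-- Borel–Serre type formula for Lebelt polynomials: for `r = d`,
the `t^d`-coefficient of `Σ_{p=0}^d (-1)^p L^p_{α,β}` equals `(-1)^d c_d`,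
where `c_d` is the `t^d`-coefficient of `E_α(t)/E_β(t)`.  Here `L^p_{α,β}` is
the `u^p`-coefficient of `C = F_α/F_β` (given by `F_α = F_β ⬝ Cser`), and the
quotient `E_α(t)/E_β(t)` is given by `(∏_j (1+β_j t)) ⬝ Eq = ∏_i (1+α_i t)`. -/
theorem Lebelt_BorelSerre [Field K] [CharZero K] {n d : ℕ} (hdn : d ≤ n)
    (α : Fin n → K) (β : Fin (n - d) → K)
    (Cser : PowerSeries (PowerSeries K))
    (hC : Fser α = Fser β * Cser)
    (Eq' : PowerSeries K)
    (hE : (∏ j : Fin (n - d), (1 + PowerSeries.C (β j) * PowerSeries.X)) * Eq' =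
      ∏ i : Fin n, (1 + PowerSeries.C (α i) * PowerSeries.X)) :
    ∑ p ∈ Finset.range (d + 1),
        (-1 : K) ^ p * PowerSeries.coeff p (PowerSeries.coeff d Cser) =
      (-1 : K) ^ d * PowerSeries.coeff d Eq' := by
  classical
  set c1 := (PowerSeries.C (R := PowerSeries K)) with hc1
  set A : PowerSeries (PowerSeries K) := ∏ i : Fin n, Gf K (α i) with hA
  set B : PowerSeries (PowerSeries K) := ∏ j : Fin (n - d), Gf K (β j) with hB
  have hcB : constantCoeff (R := PowerSeries K) B = 1 := by
    rw [hB, map_prod]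
    simp [constantCoeff_Gf]
  set Binv := PowerSeries.invOfUnit B 1 with hBinvdef
  have hBinv : B * Binv = 1 :=
    PowerSeries.mul_invOfUnit B 1 (by rw [hcB, Units.val_one])
  set H := A * Binv with hH
  -- rewrite hC
  rw [Fser_eq α, Fser_eq β, ← hA, ← hB, ← hc1] at hC
  have honeX_ne : (1 + X : PowerSeries K) ≠ 0 := fun h => by
    have := congrArg (constantCoeff (R := K)) h
    simp at this
  have hZ : c1 ((1 + X) ^ (n - d)) ≠ 0 := fun h => by
    have : ((1 + X : PowerSeries K)) ^ (n - d) = 0 := by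
      have := congrArg (constantCoeff (R := PowerSeries K)) h
      simpa [hc1] using this
    exact pow_ne_zero _ honeX_ne this
  have hBne : B ≠ 0 := fun h => by rw [h, map_zero] at hcB; exact one_ne_zero hcB.symm
  have hCser : Cser = c1 ((1 + X) ^ d) * H := by
    have hpow : ((1 + X : PowerSeries K)) ^ n = (1 + X) ^ (n - d) * (1 + X) ^ d := by
      rw [← pow_add, Nat.sub_add_cancel hdn]
    have key : (c1 ((1 + X) ^ (n - d)) * B) * Cser
        = (c1 ((1 + X) ^ (n - d)) * B) * (c1 ((1 + X) ^ d) * H) := by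
      have lhs : (c1 ((1 + X) ^ (n - d)) * B) * Cser = c1 ((1 + X) ^ n) * A := by
        rw [hC]
      have rhs : (c1 ((1 + X) ^ (n - d)) * B) * (c1 ((1 + X) ^ d) * H)
          = c1 ((1 + X) ^ n) * A := by
        rw [hH, hpow, map_mul]
        calc c1 ((1 + X) ^ (n - d)) * B * (c1 ((1 + X) ^ d) * (A * Binv))
            = c1 ((1 + X) ^ (n - d)) * c1 ((1 + X) ^ d) * A * (B * Binv) := by ring
          _ = c1 ((1 + X) ^ (n - d)) * c1 ((1 + X) ^ d) * A := by rw [hBinv, mul_one]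
          _ = _ := by ring
      rw [lhs, rhs]
    exact mul_left_cancel₀ (mul_ne_zero hZ hBne) key
  -- Q facts
  have hQB : Q B (∏ j : Fin (n - d), (1 + PowerSeries.C (R := K) (β j) * PowerSeries.X)) :=
    Q_prod _ _ _ fun j _ => Q_factor (β j)
  have hQA : Q A (∏ i : Fin n, (1 + PowerSeries.C (R := K) (α i) * PowerSeries.X)) :=
    Q_prod _ _ _ fun i _ => Q_factor (α i)
  have hBH : B * H = A := by
    rw [hH]
    calc B * (A * Binv) = A * (B * Binv) := by ring
      _ = A := by rw [hBinv, mul_one]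
  have hQH : Q H Eq' := by
    refine Q_cancel hQB ?_ hcB
    rw [hBH, hE]
    exact hQA
  -- final computation
  have hrd := hQH d
  set e := PowerSeries.coeff (R := K) d Eq' with he
  set r := PowerSeries.coeff (R := PowerSeries K) d H - e • Vv K ^ d with hr
  have hcoeffH : PowerSeries.coeff (R := PowerSeries K) d H = e • Vv K ^ d + r := by
    rw [hr]; ring
  have hcoeffC : PowerSeries.coeff (R := PowerSeries K) d Cser
      = (1 + X) ^ d * (e • Vv K ^ d) + (1 + X) ^ d * r := by
    rw [hCser, hc1, PowerSeries.coeff_C_mul, hcoeffH, mul_add]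
  rw [hcoeffC]
  simp only [map_add]
  rw [Finset.sum_congr rfl fun p _ => (by ring :
    (-1 : K) ^ p * (PowerSeries.coeff (R := K) p ((1 + X) ^ d * (e • Vv K ^ d))
      + PowerSeries.coeff (R := K) p ((1 + X) ^ d * r)) =
    (-1 : K) ^ p * PowerSeries.coeff (R := K) p ((1 + X) ^ d * (e • Vv K ^ d))
      + (-1 : K) ^ p * PowerSeries.coeff (R := K) p ((1 + X) ^ d * r)),
    Finset.sum_add_distrib, sum_coeff_top, vanish d hrd, add_zero]
end
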